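/- If S is an s-unital strongly G-graded ring, then S is nearly epsilon-strongly G-graded, s ∈ sS_e ∩ S_e s for every s ∈ S, and the right annihilator of S_x in S is zero for every x ∈ G. -/

import Mathlib

open Pointwise

/-- The product `UV` of two subsets of a ring: the additive subgroup consisting of all
finite sums of products `u * v` with `u ∈ U`, `v ∈ V`. -/
def setProd {S : Type*} [NonUnitalRing S] (U V : Set S) : AddSubgroup S :=
  AddSubgroup.closure (U * V)

section Aux

variable {G : Type*} [Group G] [DecidableEq G]
    {S : Type*} [NonUnitalRing S] (𝒮 : G → AddSubgroup S)
    [DirectSum.Decomposition 𝒮]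

/-- Projection of `t * s` for `s` homogeneous of degree `x`. -/
lemma auxProjL (hmul : ∀ {x y : G} {a b : S}, a ∈ 𝒮 x → b ∈ 𝒮 y → a * b ∈ 𝒮 (x * y))
    {x : G} {s : S} (hs : s ∈ 𝒮 x) (t : S) :
    (DirectSum.decompose 𝒮 (t * s) x : S) = (DirectSum.decompose 𝒮 t 1 : S) * s := by
  induction t using DirectSum.Decomposition.inductionOn 𝒮 with
  | zero => simp
  | @homogeneous y m =>
      rcases eq_or_ne y 1 with rfl | hy
      · rw [DirectSum.decompose_of_mem_same 𝒮 m.2,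
          DirectSum.decompose_of_mem_same 𝒮 (x := (m : S) * s)]
        simpa using hmul m.2 hs
      · rw [DirectSum.decompose_of_mem_ne 𝒮 m.2 hy,
          DirectSum.decompose_of_mem_ne 𝒮 (hmul m.2 hs)
            (fun h => hy (mul_right_cancel (show y * x = 1 * x by rw [one_mul]; exact h))),
          zero_mul]
  | add a b ha hb =>
      rw [add_mul, DirectSum.decompose_add, DirectSum.add_apply, AddSubgroup.coe_add,
        ha, hb, DirectSum.decompose_add, DirectSum.add_apply, AddSubgroup.coe_add, add_mul]

lemma auxProjR (hmul : ∀ {x y : G} {a b : S}, a ∈ 𝒮 x → b ∈ 𝒮 y → a * b ∈ 𝒮 (x * y))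
    {x : G} {s : S} (hs : s ∈ 𝒮 x) (t : S) :
    (DirectSum.decompose 𝒮 (s * t) x : S) = s * (DirectSum.decompose 𝒮 t 1 : S) := by
  induction t using DirectSum.Decomposition.inductionOn 𝒮 with
  | zero => simp
  | @homogeneous y m =>
      rcases eq_or_ne y 1 with rfl | hy
      · rw [DirectSum.decompose_of_mem_same 𝒮 m.2,
          DirectSum.decompose_of_mem_same 𝒮 (x := s * (m : S))]
        simpa using hmul hs m.2
      · rw [DirectSum.decompose_of_mem_ne 𝒮 m.2 hy,
          DirectSum.decompose_of_mem_ne 𝒮 (hmul hs m.2)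
            (fun h => hy (mul_left_cancel (show x * y = x * 1 by rw [mul_one]; exact h))),
          mul_zero]
  | add a b ha hb =>
      rw [mul_add, DirectSum.decompose_add, DirectSum.add_apply, AddSubgroup.coe_add,
        ha, hb, DirectSum.decompose_add, DirectSum.add_apply, AddSubgroup.coe_add, mul_add]

/-- Every homogeneous element has a left unit in `𝒮 1`. -/
lemma auxH_left (hmul : ∀ {x y : G} {a b : S}, a ∈ 𝒮 x → b ∈ 𝒮 y → a * b ∈ 𝒮 (x * y))
    (hsu : ∀ s : S, s ∈ setProd {s} (Set.univ : Set S) ∧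
        s ∈ setProd (Set.univ : Set S) {s})
    {x : G} {s : S} (hs : s ∈ 𝒮 x) : ∃ e ∈ 𝒮 (1 : G), e * s = s := by
  have h1 : s ∈ setProd (Set.univ : Set S) {s} := (hsu s).2
  have h2 : setProd (Set.univ : Set S) {s} ≤ (AddMonoidHom.mulRight s).range := by
    apply AddSubgroup.closure_le _ |>.2
    rintro _ ⟨u, -, v, rfl, rfl⟩
    exact ⟨u, rfl⟩
  obtain ⟨t, ht⟩ := h2 h1
  refine ⟨(DirectSum.decompose 𝒮 t 1 : S), SetLike.coe_mem _, ?_⟩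
  rw [← auxProjL 𝒮 hmul hs t]
  simp only [AddMonoidHom.mulRight_apply] at ht
  rw [ht, DirectSum.decompose_of_mem_same 𝒮 hs]

lemma auxH_right (hmul : ∀ {x y : G} {a b : S}, a ∈ 𝒮 x → b ∈ 𝒮 y → a * b ∈ 𝒮 (x * y))
    (hsu : ∀ s : S, s ∈ setProd {s} (Set.univ : Set S) ∧
        s ∈ setProd (Set.univ : Set S) {s})
    {x : G} {s : S} (hs : s ∈ 𝒮 x) : ∃ e ∈ 𝒮 (1 : G), s * e = s := by
  have h1 : s ∈ setProd {s} (Set.univ : Set S) := (hsu s).1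
  have h2 : setProd {s} (Set.univ : Set S) ≤ (AddMonoidHom.mulLeft s).range := by
    apply AddSubgroup.closure_le _ |>.2
    rintro _ ⟨u, rfl, v, -, rfl⟩
    exact ⟨v, rfl⟩
  obtain ⟨t, ht⟩ := h2 h1
  refine ⟨(DirectSum.decompose 𝒮 t 1 : S), SetLike.coe_mem _, ?_⟩
  rw [← auxProjR 𝒮 hmul hs t]
  have ht2 : s * t = s := ht
  rw [ht2, DirectSum.decompose_of_mem_same 𝒮 hs]

/-- Common left unit in `𝒮 1` for finitely many homogeneous elements. -/
lemma auxCommon_left (hmul : ∀ {x y : G} {a b : S}, a ∈ 𝒮 x → b ∈ 𝒮 y → a * b ∈ 𝒮 (x * y))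
    (hsu : ∀ s : S, s ∈ setProd {s} (Set.univ : Set S) ∧
        s ∈ setProd (Set.univ : Set S) {s})
    (F : Finset G) (f : G → S) (hf : ∀ x ∈ F, f x ∈ 𝒮 x) :
    ∃ e ∈ 𝒮 (1 : G), ∀ x ∈ F, e * f x = f x := by
  classical
  induction F using Finset.induction_on with
  | empty => exact ⟨0, zero_mem _, by simp⟩
  | @insert x F hx ih =>
      obtain ⟨e₁, he₁, he₁f⟩ := ih (fun y hy => hf y (Finset.mem_insert_of_mem hy))
      have hfx : f x ∈ 𝒮 x := hf x (Finset.mem_insert_self x F)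
      have hdiff : f x - e₁ * f x ∈ 𝒮 x := by
        have : e₁ * f x ∈ 𝒮 x := by simpa using hmul he₁ hfx
        exact sub_mem hfx this
      obtain ⟨e₂, he₂, he₂d⟩ := auxH_left 𝒮 hmul hsu hdiff
      refine ⟨e₁ + e₂ - e₂ * e₁, ?_, ?_⟩
      · exact sub_mem (add_mem he₁ he₂) (by simpa using hmul he₂ he₁)
      · intro y hy
        rcases Finset.mem_insert.1 hy with rfl | hy'
        · rw [sub_mul, add_mul, mul_assoc, add_sub_assoc, ← mul_sub, he₂d]
          abel
        · rw [sub_mul, add_mul, mul_assoc, he₁f y hy']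
          abel

lemma auxCommon_right (hmul : ∀ {x y : G} {a b : S}, a ∈ 𝒮 x → b ∈ 𝒮 y → a * b ∈ 𝒮 (x * y))
    (hsu : ∀ s : S, s ∈ setProd {s} (Set.univ : Set S) ∧
        s ∈ setProd (Set.univ : Set S) {s})
    (F : Finset G) (f : G → S) (hf : ∀ x ∈ F, f x ∈ 𝒮 x) :
    ∃ e ∈ 𝒮 (1 : G), ∀ x ∈ F, f x * e = f x := by
  classical
  induction F using Finset.induction_on with
  | empty => exact ⟨0, zero_mem _, by simp⟩
  | @insert x F hx ih =>
      obtain ⟨e₁, he₁, he₁f⟩ := ih (fun y hy => hf y (Finset.mem_insert_of_mem hy))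
      have hfx : f x ∈ 𝒮 x := hf x (Finset.mem_insert_self x F)
      have hdiff : f x - f x * e₁ ∈ 𝒮 x := by
        have : f x * e₁ ∈ 𝒮 x := by simpa using hmul hfx he₁
        exact sub_mem hfx this
      obtain ⟨e₂, he₂, he₂d⟩ := auxH_right 𝒮 hmul hsu hdiff
      refine ⟨e₁ + e₂ - e₁ * e₂, ?_, ?_⟩
      · exact sub_mem (add_mem he₁ he₂) (by simpa using hmul he₁ he₂)
      · intro y hy
        rcases Finset.mem_insert.1 hy with rfl | hy'
        · rw [mul_sub, mul_add, ← mul_assoc, add_sub_assoc, ← sub_mul, he₂d]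
          abel
        · rw [mul_sub, mul_add, ← mul_assoc, he₁f y hy']
          abel

/-- Every element has a left unit in `𝒮 1`. -/
lemma auxU_left (hmul : ∀ {x y : G} {a b : S}, a ∈ 𝒮 x → b ∈ 𝒮 y → a * b ∈ 𝒮 (x * y))
    (hsu : ∀ s : S, s ∈ setProd {s} (Set.univ : Set S) ∧
        s ∈ setProd (Set.univ : Set S) {s})
    (s : S) : ∃ e ∈ 𝒮 (1 : G), e * s = s := by
  classical
  obtain ⟨e, he, hef⟩ := auxCommon_left 𝒮 hmul hsu
    (DFinsupp.support (DirectSum.decompose 𝒮 s))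
    (fun x => (DirectSum.decompose 𝒮 s x : S)) (fun x _ => SetLike.coe_mem _)
  refine ⟨e, he, ?_⟩
  conv_lhs => rw [← DirectSum.sum_support_decompose 𝒮 s]
  rw [Finset.mul_sum]
  rw [Finset.sum_congr rfl hef]
  exact DirectSum.sum_support_decompose 𝒮 s

lemma auxU_right (hmul : ∀ {x y : G} {a b : S}, a ∈ 𝒮 x → b ∈ 𝒮 y → a * b ∈ 𝒮 (x * y))
    (hsu : ∀ s : S, s ∈ setProd {s} (Set.univ : Set S) ∧
        s ∈ setProd (Set.univ : Set S) {s})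
    (s : S) : ∃ e ∈ 𝒮 (1 : G), s * e = s := by
  classical
  obtain ⟨e, he, hef⟩ := auxCommon_right 𝒮 hmul hsu
    (DFinsupp.support (DirectSum.decompose 𝒮 s))
    (fun x => (DirectSum.decompose 𝒮 s x : S)) (fun x _ => SetLike.coe_mem _)
  refine ⟨e, he, ?_⟩
  conv_lhs => rw [← DirectSum.sum_support_decompose 𝒮 s]
  rw [Finset.sum_mul]
  rw [Finset.sum_congr rfl hef]
  exact DirectSum.sum_support_decompose 𝒮 s

end Aux

/-- If `S` is an `s`-unital strongly `G`-graded ring, then (a) `S` is nearly epsilon-strongly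
`G`-graded, (b) `s ∈ s S_e ∩ S_e s` for every `s ∈ S`, and (c) the right annihilator of
`S_x` in `S` is zero for every `x ∈ G`. -/
theorem sUnital_strongly_graded_properties {G : Type*} [Group G] [DecidableEq G]
    {S : Type*} [NonUnitalRing S] (𝒮 : G → AddSubgroup S)
    [DirectSum.Decomposition 𝒮]
    (hmul : ∀ {x y : G} {a b : S}, a ∈ 𝒮 x → b ∈ 𝒮 y → a * b ∈ 𝒮 (x * y))
    (hstrong : ∀ x y : G, setProd (𝒮 x : Set S) (𝒮 y : Set S) = 𝒮 (x * y))
    (hsu : ∀ s : S, s ∈ setProd {s} (Set.univ : Set S) ∧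
        s ∈ setProd (Set.univ : Set S) {s}) :
    (∀ x : G, ∀ s ∈ 𝒮 x,
      (∃ ε ∈ setProd (𝒮 x : Set S) (𝒮 x⁻¹ : Set S), ε * s = s) ∧
      (∃ ε' ∈ setProd (𝒮 x⁻¹ : Set S) (𝒮 x : Set S), s * ε' = s)) ∧
    (∀ s : S, s ∈ setProd {s} (𝒮 (1 : G) : Set S) ∧
        s ∈ setProd (𝒮 (1 : G) : Set S) {s}) ∧
    (∀ x : G, ∀ s : S, (∀ a ∈ 𝒮 x, a * s = 0) → s = 0) := by
  refine ⟨?_, ?_, ?_⟩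
  · intro x s hs
    constructor
    · obtain ⟨e, he, hes⟩ := auxH_left 𝒮 hmul hsu hs
      refine ⟨e, ?_, hes⟩
      have := hstrong x x⁻¹
      rw [mul_inv_cancel] at this
      rw [this]
      exact he
    · obtain ⟨e, he, hes⟩ := auxH_right 𝒮 hmul hsu hs
      refine ⟨e, ?_, hes⟩
      have := hstrong x⁻¹ x
      rw [inv_mul_cancel] at this
      rw [this]
      exact he
  · intro s
    constructor
    · obtain ⟨e, he, hes⟩ := auxU_right 𝒮 hmul hsu s
      nth_rewrite 2 [← hes]
      exact AddSubgroup.subset_closure ⟨s, rfl, e, he, rfl⟩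
    · obtain ⟨e, he, hes⟩ := auxU_left 𝒮 hmul hsu s
      nth_rewrite 2 [← hes]
      exact AddSubgroup.subset_closure ⟨e, he, s, rfl, rfl⟩
  · intro x s hann
    have h1 : ∀ u ∈ 𝒮 (1 : G), u * s = 0 := by
      intro u hu
      have hset : (𝒮 (1 : G) : AddSubgroup S) ≤ (AddMonoidHom.mulRight s).ker := by
        have hst := hstrong x⁻¹ x
        rw [inv_mul_cancel] at hst
        rw [← hst]
        apply AddSubgroup.closure_le _ |>.2
        rintro _ ⟨a, ha, b, hb, rfl⟩
        simp only [SetLike.mem_coe, AddMonoidHom.mem_ker, AddMonoidHom.mulRight_apply]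
        rw [mul_assoc, hann b hb, mul_zero]
      simpa using hset hu
    obtain ⟨e, he, hes⟩ := auxU_left 𝒮 hmul hsu s
    rw [← hes, h1 e he]
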